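/- arXiv:1810.03162 — 3 statements merged into one kernel-verified Lean document; each statement's English description precedes it below -/
import Mathlib

section
/- If the cost x(L) = (1/(n·C))·[exp(ln(1+n·C·α)/cap · L) − 1] of an edge satisfies x(L) < b for some benefit b with 1 ≤ b ≤ α, then the load L is strictly less than the capacity cap. -/
/-- If the cost x(L) of an edge satisfies x(L) < b for some benefit b with 1 ≤ b ≤ α,
then the load L is strictly less than the capacity cap. -/
theorem covce_cost_lt_benefit_implies_load_lt_cap (n C α cap L b : ℝ)
    (hn : 1 ≤ n) (hC : 1 ≤ C) (hα : 1 ≤ α) (hcap : 0 < cap) (hL : 0 ≤ L)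
    (hb1 : 1 ≤ b) (hbα : b ≤ α)
    (hx : (1 / (n * C)) * (Real.exp ((Real.log (1 + n * C * α) / cap) * L) - 1) < b) :
    L < cap := by
  have hnC : (1:ℝ) ≤ n * C := by nlinarith
  have hnC0 : (0:ℝ) < n * C := lt_of_lt_of_le one_pos hnC
  have hnCα : (1:ℝ) ≤ n * C * α := le_trans hnC (le_mul_of_one_le_right hnC0.le hα)
  have hlog : 0 < Real.log (1 + n * C * α) :=
    Real.log_pos (by linarith)
  have hk : 0 < Real.log (1 + n * C * α) / cap := div_pos hlog hcap
  have h1 : Real.exp ((Real.log (1 + n * C * α) / cap) * L) - 1 < n * C * b := by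
    have h := (div_lt_iff₀ hnC0).mp (by rwa [one_div, inv_mul_eq_div] at hx)
    linarith
  have h2 : Real.exp ((Real.log (1 + n * C * α) / cap) * L) < 1 + n * C * α := by
    have : n * C * b ≤ n * C * α := by nlinarith
    linarith
  have h3 : (Real.log (1 + n * C * α) / cap) * L < Real.log (1 + n * C * α) := by
    have := Real.log_lt_log (Real.exp_pos _) h2
    rwa [Real.log_exp] at this
  -- from k*L < k*cap with k>0
  have : (Real.log (1 + n * C * α) / cap) * L < (Real.log (1 + n * C * α) / cap) * cap := by
    rwa [div_mul_cancel₀ _ hcap.ne']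
  exact lt_of_mul_lt_mul_left this hk.le
end

section
/- For the cost function x(L) = (1/(n·C))·[exp(ln(1+n·C·α)/cap · L) − 1], if the load L is at least the capacity cap, then x(L) ≥ α; consequently, since every benefit b satisfies b ≤ α, the COVCE acceptance condition cost < b can never hold for an embedding using such a resource. -/
/-- If the load L is at least the capacity cap, then x(L) ≥ α; consequently, since every
benefit b satisfies b ≤ α, the acceptance condition cost < b can never hold. -/
theorem covce_saturated_cost_ge_alpha (n C α cap L : ℝ)
    (hn : 1 ≤ n) (hC : 1 ≤ C) (hα : 1 ≤ α) (hcap : 0 < cap) (hL : cap ≤ L) :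
    α ≤ (1 / (n * C)) * (Real.exp ((Real.log (1 + n * C * α) / cap) * L) - 1) ∧
    ∀ b : ℝ, b ≤ α →
      ¬ ((1 / (n * C)) * (Real.exp ((Real.log (1 + n * C * α) / cap) * L) - 1) < b) := by
  have hnC : (1:ℝ) ≤ n * C := one_le_mul_of_one_le_of_one_le hn hC
  have hnC0 : (0:ℝ) < n * C := lt_of_lt_of_le one_pos hnC
  have hx : (1:ℝ) < 1 + n * C * α := by nlinarith
  have hlog : 0 ≤ Real.log (1 + n * C * α) := Real.log_nonneg hx.le
  have hexp : 1 + n * C * α ≤ Real.exp ((Real.log (1 + n * C * α) / cap) * L) := by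
    calc 1 + n * C * α = Real.exp (Real.log (1 + n * C * α)) := by
          rw [Real.exp_log (by linarith)]
      _ ≤ _ := by
          apply Real.exp_le_exp.mpr
          rw [div_mul_eq_mul_div, le_div_iff₀ hcap]
          nlinarith
  have hmain : α ≤ (1 / (n * C)) * (Real.exp ((Real.log (1 + n * C * α) / cap) * L) - 1) := by
    rw [one_div, inv_mul_eq_div, le_div_iff₀ hnC0]
    nlinarith
  exact ⟨hmain, fun b hb hlt => absurd (lt_of_le_of_lt hmain hlt) (not_lt.mpr hb)⟩
end

section
/- In the online routing algorithm, the increase of the primal cost when accepting a request routed on a path p is at most 1 + 2·u_min·[exp(ln(1+n)/u_min) − 1], given that Σ_{e∈p} x(e) < 1 before the update, each edge capacity u(e) ≥ u_min, and |p| ≤ n. -/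
/-- Slope inequality for exp: for 0 < a ≤ b, b·(eᵃ−1) ≤ a·(eᵇ−1). -/
lemma exp_slope_mono {a b : ℝ} (ha : 0 < a) (hab : a ≤ b) :
    b * (Real.exp a - 1) ≤ a * (Real.exp b - 1) := by
  have hb : 0 < b := lt_of_lt_of_le ha hab
  have hw1 : 0 ≤ 1 - a / b := by
    have : a / b ≤ 1 := (div_le_one hb).2 hab
    linarith
  have hw2 : 0 ≤ a / b := by positivity
  have hconv := convexOn_exp.2 (Set.mem_univ (0 : ℝ)) (Set.mem_univ b) hw1 hw2
      (by ring : (1 - a / b) + a / b = 1)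
  have hpt : (1 - a / b) • (0 : ℝ) + (a / b) • b = a := by
    rw [smul_eq_mul, smul_eq_mul, mul_zero, zero_add, div_mul_cancel₀ a hb.ne']
  rw [hpt] at hconv
  simp only [smul_eq_mul, Real.exp_zero] at hconv
  have h3 : b * Real.exp a ≤ b * ((1 - a / b) * 1 + a / b * Real.exp b) :=
    mul_le_mul_of_nonneg_left hconv hb.le
  have h4 : b * ((1 - a / b) * 1 + a / b * Real.exp b)
      = b - a + a * Real.exp b := by field_simp
  nlinarith [h3, h4]

/-- u ↦ u·(exp(c/u)−1) is nonincreasing: for 0 < v ≤ u and c > 0. -/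
lemma mul_exp_div_mono {c u v : ℝ} (hc : 0 < c) (hv : 0 < v) (hvu : v ≤ u) :
    u * (Real.exp (c / u) - 1) ≤ v * (Real.exp (c / v) - 1) := by
  have hu : 0 < u := lt_of_lt_of_le hv hvu
  have ha : 0 < c / u := by positivity
  have hab : c / u ≤ c / v := div_le_div_of_nonneg_left hc.le hv hvu
  have key := exp_slope_mono ha hab
  -- key : (c/v) * (exp (c/u) - 1) ≤ (c/u) * (exp (c/v) - 1)
  have h := mul_le_mul_of_nonneg_left key (by positivity : (0:ℝ) ≤ u * v / c)
  have h1 : u * v / c * (c / v * (Real.exp (c / u) - 1))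
      = u * (Real.exp (c / u) - 1) := by field_simp
  have h2 : u * v / c * (c / u * (Real.exp (c / v) - 1))
      = v * (Real.exp (c / v) - 1) := by field_simp
  rw [h1, h2] at h
  exact h

/-- The increase of the primal cost when accepting a request routed on a path p is at
most 1 + 2·u_min·[exp(ln(1+n)/u_min) − 1], given Σ_{e∈p} x(e) < 1, u(e) ≥ u_min and
|p| ≤ n. -/
theorem online_routing_primal_cost_increase {E : Type*} [DecidableEq E]
    (p : Finset E) (n u_min : ℝ) (u x : E → ℝ)
    (hn : 1 ≤ n) (humin : 1 ≤ u_min) (hcard : (p.card : ℝ) ≤ n)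
    (hu : ∀ e ∈ p, u_min ≤ u e) (hx0 : ∀ e ∈ p, 0 ≤ x e)
    (hsum : ∑ e ∈ p, x e < 1) :
    (∑ e ∈ p, u e * ((x e * Real.exp (Real.log (1 + n) / u e)
        + (1 / n) * (Real.exp (Real.log (1 + n) / u e) - 1)) - x e)) + 1
      ≤ 1 + 2 * u_min * (Real.exp (Real.log (1 + n) / u_min) - 1) := by
  set c := Real.log (1 + n) with hc_def
  have hn0 : (0:ℝ) < n := by linarith
  have hv : (0:ℝ) < u_min := by linarith
  have hc : 0 < c := Real.log_pos (by linarith)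
  set M := u_min * (Real.exp (c / u_min) - 1) with hM_def
  have hM0 : 0 ≤ M := by
    have : 1 ≤ Real.exp (c / u_min) := Real.one_le_exp (by positivity)
    nlinarith
  have hterm : ∀ e ∈ p, u e * ((x e * Real.exp (c / u e)
      + (1 / n) * (Real.exp (c / u e) - 1)) - x e) ≤ M * (x e + 1 / n) := by
    intro e he
    have hue : u_min ≤ u e := hu e he
    have hkey : u e * (Real.exp (c / u e) - 1) ≤ M := mul_exp_div_mono hc hv hue
    have hxnn : 0 ≤ x e + 1 / n := by
      have := hx0 e he; positivity
    have heq : u e * ((x e * Real.exp (c / u e)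
        + (1 / n) * (Real.exp (c / u e) - 1)) - x e)
        = (u e * (Real.exp (c / u e) - 1)) * (x e + 1 / n) := by ring
    rw [heq]
    exact mul_le_mul_of_nonneg_right hkey hxnn
  have hsum1 : (∑ e ∈ p, u e * ((x e * Real.exp (c / u e)
      + (1 / n) * (Real.exp (c / u e) - 1)) - x e))
      ≤ ∑ e ∈ p, M * (x e + 1 / n) := Finset.sum_le_sum hterm
  have hsum2 : ∑ e ∈ p, M * (x e + 1 / n)
      = M * (∑ e ∈ p, x e) + M * (p.card / n) := by
    rw [← Finset.mul_sum, Finset.sum_add_distrib, Finset.sum_const,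
      nsmul_eq_mul]
    ring
  have hcn : (p.card : ℝ) / n ≤ 1 := (div_le_one hn0).2 hcard
  have hxs : 0 ≤ ∑ e ∈ p, x e := Finset.sum_nonneg hx0
  have : M * (∑ e ∈ p, x e) + M * (p.card / n) ≤ 2 * M := by
    nlinarith [mul_le_mul_of_nonneg_left hcn hM0,
      mul_le_mul_of_nonneg_left hsum.le hM0]
  linarith [hsum1, hsum2 ▸ hsum1, this]
end
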